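/- Let P be a finite poset, k a field, and M a persistence module over P. Let f : X → M be an interval cover of M, and write X = X_1 ⊕ ⋯ ⊕ X_m with each X_i an interval module. Then: (1) f is surjective; (2) the restriction of f to each summand X_i is injective; (3) supp(X) = supp(M). In particular, each X_i is isomorphic to an interval submodule of M. -/

import Mathlib

open CategoryTheory CategoryTheory.Limits

attribute [local instance] CategoryTheory.Limits.HasFiniteBiproducts.of_hasFiniteProducts

section Posets

variable {P : Type} [PartialOrder P]

/-- Zigzag connectivity of two elements of a subset `S` of a poset: they are linked by a
zigzag of comparable pairs inside `S`. -/
def ZigzagConnIn (S : Set P) (a b : S) : Prop :=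
  Relation.ReflTransGen (fun u v : S => (u : P) ≤ v ∨ (v : P) ≤ u) a b

/-- A subset of a poset is convex if `x ≤ z ≤ y` with `x, y` in the subset implies `z` is. -/
def IsConvex (S : Set P) : Prop :=
  ∀ ⦃x y z : P⦄, x ∈ S → y ∈ S → x ≤ z → z ≤ y → z ∈ S

/-- An interval of a poset: a nonempty, convex, zigzag-connected subset. -/
def IsIntervalSet (S : Set P) : Prop :=
  S.Nonempty ∧ IsConvex S ∧ ∀ a b : S, ZigzagConnIn S a b

end Posets

section IntervalModules

variable (k : Type) [Field k] {P : Type} [PartialOrder P]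

open Classical in
/-- The linear map between the fibers of the interval module. -/
noncomputable def intervalModuleAux (S : Set P) (p q : P) :
    ↥(if p ∈ S then (⊤ : Submodule k k) else ⊥) →ₗ[k]
      ↥(if q ∈ S then (⊤ : Submodule k k) else ⊥) where
  toFun x := ⟨(if p ∈ S ∧ q ∈ S then (1 : k) else 0) * x.1, by
    by_cases hq : q ∈ S
    · rw [if_pos hq]; exact Submodule.mem_top
    · simp only [hq, and_false, if_false, zero_mul]; exact Submodule.zero_mem _⟩
  map_add' x y := by ext; simp [mul_add]
  map_smul' c x := by ext; simp

open Classical in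
/-- The interval module `k_S` associated to a convex subset `S` of a poset `P`:
it is `k` at points of `S`, `0` elsewhere, with identity structure maps inside `S`. -/
noncomputable def intervalModule (S : Set P) (hS : IsConvex S) : P ⥤ ModuleCat.{0} k where
  obj p := ModuleCat.of k ↥(if p ∈ S then (⊤ : Submodule k k) else ⊥)
  map {p q} _ := ModuleCat.ofHom (intervalModuleAux k S p q)
  map_id p := by
    ext1
    apply LinearMap.ext
    rintro ⟨x, hx⟩
    apply Subtype.ext
    show (if p ∈ S ∧ p ∈ S then (1 : k) else 0) * x = x
    by_cases hp : p ∈ S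
    · simp [hp]
    · rw [if_neg hp] at hx
      simp [hp, (Submodule.mem_bot k).mp hx]
  map_comp {p q r} f g := by
    ext1
    apply LinearMap.ext
    rintro ⟨x, hx⟩
    apply Subtype.ext
    show (if p ∈ S ∧ r ∈ S then (1 : k) else 0) * x
      = (if q ∈ S ∧ r ∈ S then (1 : k) else 0) * ((if p ∈ S ∧ q ∈ S then (1 : k) else 0) * x)
    by_cases hp : p ∈ S
    · by_cases hr : r ∈ S
      · have hq : q ∈ S := hS hp hr (leOfHom f) (leOfHom g)
        simp [hp, hq, hr]
      · simp [hr]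
    · rw [if_neg hp] at hx
      simp [(Submodule.mem_bot k).mp hx]

/-- A persistence module is an interval module if it is isomorphic to `k_S` for some
interval `S`. -/
def IsIntervalModule (M : P ⥤ ModuleCat.{0} k) : Prop :=
  ∃ (S : Set P) (hS : IsIntervalSet S), Nonempty (M ≅ intervalModule k S hS.2.1)

/-- A persistence module is interval-decomposable if it is isomorphic to a finite direct sum
of interval modules. -/
def IsIntervalDecomposable (M : P ⥤ ModuleCat.{0} k) : Prop :=
  ∃ (n : ℕ) (J : Fin n → (P ⥤ ModuleCat.{0} k)),
    (∀ i, IsIntervalModule k (J i)) ∧ Nonempty (M ≅ ⨁ J)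

/-- The support of a persistence module. -/
def moduleSupport (M : P ⥤ ModuleCat.{0} k) : Set P := {p : P | ¬ IsZero (M.obj p)}

/-- A persistence module valued in finite-dimensional vector spaces. -/
def PointwiseFinite (M : P ⥤ ModuleCat.{0} k) : Prop :=
  ∀ p : P, FiniteDimensional k (M.obj p)

end IntervalModules

section Approximations

variable {C : Type*} [Category C]

/-- `f : X ⟶ M` is a right `𝒳`-approximation of `M` if `X ∈ 𝒳` and every morphism
from an object of `𝒳` to `M` factors through `f`. -/
def IsRightApproximation (𝒳 : C → Prop) {X M : C} (f : X ⟶ M) : Prop :=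
  𝒳 X ∧ ∀ ⦃Y : C⦄ (g : Y ⟶ M), 𝒳 Y → ∃ h : Y ⟶ X, h ≫ f = g

/-- `f : X ⟶ M` is right minimal if every endomorphism `g` of `X` with `f ∘ g = f`
is an isomorphism. -/
def IsRightMinimal {X M : C} (f : X ⟶ M) : Prop :=
  ∀ g : X ⟶ X, g ≫ f = f → IsIso g

end Approximations

/-- An interval cover: a right minimal approximation by interval-decomposable modules. -/
def IsIntervalCover (k : Type) [Field k] {P : Type} [PartialOrder P]
    {X M : P ⥤ ModuleCat.{0} k} (f : X ⟶ M) : Prop :=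
  IsRightApproximation (IsIntervalDecomposable k) f ∧ IsRightMinimal f

section Resolutions

variable {C : Type*} [Category C] [Limits.HasZeroMorphisms C]

/-- `M` admits a resolution `0 ⟶ J_n ⟶ ⋯ ⟶ J_1 ⟶ J_0 ⟶ M ⟶ 0` of length `n` by objects
of `𝒳`: an exact sequence in which every `J_i` lies in `𝒳`.  (The data is encoded by an
`ℕ`-indexed complex which vanishes in degrees `> n` and is exact everywhere.) -/
def HasResolutionOfLength (𝒳 : C → Prop) (n : ℕ) (M : C) : Prop :=
  ∃ (J : ℕ → C) (d : ∀ i, J (i + 1) ⟶ J i) (f : J 0 ⟶ M) (w0 : d 0 ≫ f = 0)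
    (w : ∀ i, d (i + 1) ≫ d i = 0),
    (∀ i, i ≤ n → 𝒳 (J i)) ∧ (∀ i, n < i → IsZero (J i)) ∧
    Epi f ∧ (ShortComplex.mk (d 0) f w0).Exact ∧
    ∀ i, (ShortComplex.mk (d (i + 1)) (d i) (w i)).Exact

end Resolutions


section ICovAux
variable {k : Type} [Field k] {P : Type} [PartialOrder P]

namespace ICov
open Classical

lemma val_eq_zero {A : Set P} {q : P} (h : q ∉ A)
    (x : ↥(if q ∈ A then (⊤ : Submodule k k) else ⊥)) : (x : k) = 0 := by
  have hx := x.2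
  simp only [if_neg h] at hx
  exact (Submodule.mem_bot k).mp hx

omit [PartialOrder P] in
lemma eq_zero_of_val {A : Set P} {q : P}
    {x : ↥(if q ∈ A then (⊤ : Submodule k k) else ⊥)} (h : (x : k) = 0) : x = 0 :=
  Subtype.ext (by simpa using h)

noncomputable def oneEl {A : Set P} {q : P} (h : q ∈ A) :
    ↥(if q ∈ A then (⊤ : Submodule k k) else ⊥) := ⟨1, by rw [if_pos h]; trivial⟩

omit [PartialOrder P] in
@[simp] lemma oneEl_val {A : Set P} {q : P} (h : q ∈ A) :
    ((oneEl h : ↥(if q ∈ A then (⊤ : Submodule k k) else ⊥)) : k) = 1 := rfl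

omit [PartialOrder P] in
lemma oneEl_ne_zero {A : Set P} {q : P} (h : q ∈ A) :
    (oneEl h : ↥(if q ∈ A then (⊤ : Submodule k k) else ⊥)) ≠ 0 := by
  intro e
  have h1 : (1 : k) = 0 := by
    have := congrArg Subtype.val e
    simpa using this
  exact one_ne_zero h1

noncomputable def crossAux (A B : Set P) (q : P) :
    ↥(if q ∈ A then (⊤ : Submodule k k) else ⊥) →ₗ[k]
      ↥(if q ∈ B then (⊤ : Submodule k k) else ⊥) where
  toFun x := ⟨(if q ∈ A ∧ q ∈ B then (1 : k) else 0) * x.1, by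
    by_cases hq : q ∈ B
    · rw [if_pos hq]; exact Submodule.mem_top
    · simp only [hq, and_false, if_false, zero_mul]; exact Submodule.zero_mem _⟩
  map_add' x y := by ext; simp [mul_add]
  map_smul' c x := by ext; simp [mul_left_comm]

omit [PartialOrder P] in
lemma crossAux_val (A B : Set P) (q : P)
    (x : ↥(if q ∈ A then (⊤ : Submodule k k) else ⊥)) :
    ((crossAux (k := k) A B q x : ↥(if q ∈ B then (⊤ : Submodule k k) else ⊥)) : k)
      = (if q ∈ A ∧ q ∈ B then (1 : k) else 0) * x.1 := rfl

/-- A natural transformation between interval modules given by "identity on the overlap",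
natural under a compatibility condition. -/
noncomputable def crossHom (A B : Set P) (hA : IsConvex A) (hB : IsConvex B)
    (hc : ∀ ⦃q r : P⦄, q ≤ r → q ∈ A → r ∈ B → (r ∈ A ↔ q ∈ B)) :
    intervalModule k A hA ⟶ intervalModule k B hB where
  app q := ModuleCat.ofHom (crossAux A B q)
  naturality {q r} g := by
    apply ModuleCat.hom_ext
    apply LinearMap.ext
    rintro ⟨x, hx⟩
    apply Subtype.ext
    show (if r ∈ A ∧ r ∈ B then (1:k) else 0) * ((if q ∈ A ∧ r ∈ A then (1:k) else 0) * x)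
        = (if q ∈ B ∧ r ∈ B then (1:k) else 0) * ((if q ∈ A ∧ q ∈ B then (1:k) else 0) * x)
    by_cases hq : q ∈ A
    · have hle := leOfHom g
      by_cases hrB : r ∈ B
      · have hiff := hc hle hq hrB
        by_cases hqB : q ∈ B
        · have hrA : r ∈ A := hiff.mpr hqB
          simp [hq, hqB, hrA, hrB]
        · have hrA : r ∉ A := fun h => hqB (hiff.mp h)
          simp [hq, hqB, hrA, hrB]
      · by_cases hrA : r ∈ A <;> by_cases hqB : q ∈ B <;> simp [hq, hqB, hrA, hrB]
    · simp only [if_neg hq] at hx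
      have hx0 : x = 0 := (Submodule.mem_bot k).mp hx
      subst hx0
      simp

def zigSetoid (S : Set P) : Setoid ↥S where
  r := ZigzagConnIn S
  iseqv := ⟨fun _ => Relation.ReflTransGen.refl,
    fun h => by
      induction h with
      | refl => exact Relation.ReflTransGen.refl
      | tail _ h2 ih => exact Relation.ReflTransGen.head h2.symm ih,
    fun h h' => h.trans h'⟩

def comp (S : Set P) (c : Quotient (zigSetoid S)) : Set P :=
  {x | ∃ hx : x ∈ S, Quotient.mk (zigSetoid S) ⟨x, hx⟩ = c}

lemma comp_subset {S : Set P} {c : Quotient (zigSetoid S)} : comp S c ⊆ S :=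
  fun _ h => h.1

lemma mem_comp_iff {S : Set P} {c : Quotient (zigSetoid S)} {x : P} (hx : x ∈ S) :
    x ∈ comp S c ↔ Quotient.mk (zigSetoid S) ⟨x, hx⟩ = c := by
  constructor
  · rintro ⟨hx', h⟩; exact h
  · intro h; exact ⟨hx, h⟩

lemma comp_eq_of_mem {S : Set P} {c c' : Quotient (zigSetoid S)} {x : P}
    (h : x ∈ comp S c) (h' : x ∈ comp S c') : c = c' := by
  obtain ⟨hx, rfl⟩ := h
  obtain ⟨hx', h2⟩ := h'
  exact h2

lemma comp_rel {S : Set P} {x y : P} (hx : x ∈ S) (hy : y ∈ S) (hxy : x ≤ y ∨ y ≤ x) :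
    Quotient.mk (zigSetoid S) ⟨x, hx⟩ = Quotient.mk (zigSetoid S) ⟨y, hy⟩ :=
  Quotient.sound (Relation.ReflTransGen.single hxy)

lemma comp_convex {S : Set P} (hS : IsConvex S) (c : Quotient (zigSetoid S)) :
    IsConvex (comp S c) := by
  intro x y z hx hy hxz hzy
  have hzS : z ∈ S := hS (comp_subset hx) (comp_subset hy) hxz hzy
  exact ⟨hzS, (comp_rel hzS (comp_subset hx) (Or.inr hxz)).trans hx.2⟩

lemma zig_lift {S : Set P} {c : Quotient (zigSetoid S)} (a : ↥(comp S c)) :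
    ∀ (v : ↥S), ZigzagConnIn S ⟨(a : P), comp_subset a.2⟩ v →
      ∃ hv : (v : P) ∈ comp S c, ZigzagConnIn (comp S c) a ⟨(v : P), hv⟩ := by
  intro v h
  induction h with
  | refl => exact ⟨a.2, Relation.ReflTransGen.refl⟩
  | @tail u v h1 h2 ih =>
      obtain ⟨hu, hpath⟩ := ih
      have hv : (v : P) ∈ comp S c :=
        ⟨v.2, (comp_rel v.2 u.2 h2.symm).trans ((mem_comp_iff u.2).mp hu)⟩
      exact ⟨hv, hpath.tail h2⟩

lemma comp_conn {S : Set P} {c : Quotient (zigSetoid S)} (a b : ↥(comp S c)) :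
    ZigzagConnIn (comp S c) a b := by
  have ha := (mem_comp_iff (comp_subset a.2)).mp a.2
  have hb := (mem_comp_iff (comp_subset b.2)).mp b.2
  have hab : ZigzagConnIn S ⟨(a : P), comp_subset a.2⟩ ⟨(b : P), comp_subset b.2⟩ :=
    Quotient.exact (ha.trans hb.symm)
  obtain ⟨hv, hpath⟩ := zig_lift a _ hab
  exact hpath

lemma comp_interval {S : Set P} (hS : IsConvex S) (c : Quotient (zigSetoid S)) :
    IsIntervalSet (comp S c) := by
  refine ⟨?_, comp_convex hS c, fun a b => comp_conn a b⟩
  obtain ⟨⟨x, hx⟩, rfl⟩ := Quotient.exists_rep c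
  exact ⟨x, hx, rfl⟩

lemma decomposable_of_intervalModule {M : P ⥤ ModuleCat.{0} k}
    (h : IsIntervalModule k M) : IsIntervalDecomposable k M := by
  obtain ⟨S, hS, ⟨u⟩⟩ := h
  refine ⟨1, fun _ => M, fun _ => ⟨S, hS, ⟨u⟩⟩, ⟨?_⟩⟩
  exact
    { hom := biproduct.lift fun _ => 𝟙 M
      inv := biproduct.desc fun _ => 𝟙 M
      hom_inv_id := by rw [biproduct.lift_desc]; simp
      inv_hom_id := by
        apply biproduct.hom_ext
        intro j'
        apply biproduct.hom_ext'
        intro j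
        obtain rfl : j = j' := Subsingleton.elim _ _
        simp [biproduct.ι_π_self] }

open Classical in
lemma intervalModule_decomposable [Finite P] (S : Set P) (hS : IsConvex S) :
    IsIntervalDecomposable k (intervalModule k S hS) := by
  have : Finite ↥S := Subtype.finite
  have : Finite (Quotient (zigSetoid S)) := Quotient.finite _
  have fQ : Fintype (Quotient (zigSetoid S)) := Fintype.ofFinite _
  let eQ := fQ.equivFin
  set n := Fintype.card (Quotient (zigSetoid S))
  let J : Fin n → (P ⥤ ModuleCat.{0} k) :=
    fun j => intervalModule k (comp S (eQ.symm j)) (comp_convex hS _)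
  have hcπ : ∀ (c : Quotient (zigSetoid S)) ⦃q r : P⦄,
      q ≤ r → q ∈ S → r ∈ comp S c → (r ∈ S ↔ q ∈ comp S c) := by
    intro c q r hqr hq hr
    exact iff_of_true (comp_subset hr)
      ⟨hq, (comp_rel hq (comp_subset hr) (Or.inl hqr)).trans ((mem_comp_iff (comp_subset hr)).mp hr)⟩
  have hcι : ∀ (c : Quotient (zigSetoid S)) ⦃q r : P⦄,
      q ≤ r → q ∈ comp S c → r ∈ S → (r ∈ comp S c ↔ q ∈ S) := by
    intro c q r hqr hq hr
    exact iff_of_true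
      ⟨hr, (comp_rel hr (comp_subset hq) (Or.inr hqr)).trans ((mem_comp_iff (comp_subset hq)).mp hq)⟩
      (comp_subset hq)
  let π : ∀ j : Fin n, intervalModule k S hS ⟶ J j :=
    fun j => crossHom S (comp S (eQ.symm j)) hS (comp_convex hS _) (hcπ _)
  let ι : ∀ j : Fin n, J j ⟶ intervalModule k S hS :=
    fun j => crossHom (comp S (eQ.symm j)) S (comp_convex hS _) hS (hcι _)
  refine ⟨n, J, fun j => ⟨comp S (eQ.symm j), comp_interval hS _, ⟨Iso.refl _⟩⟩, ⟨?_⟩⟩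
  have hinvhom : biproduct.desc ι ≫ biproduct.lift π = 𝟙 (⨁ J) := by
    apply biproduct.hom_ext
    intro j'
    rw [Category.assoc, biproduct.lift_π, Category.id_comp]
    apply biproduct.hom_ext'
    intro j
    rw [biproduct.ι_desc_assoc, biproduct.ι_π]
    by_cases hjj : j = j'
    · subst hjj
      rw [dif_pos rfl, eqToHom_refl]
      apply NatTrans.ext
      funext q
      apply ModuleCat.hom_ext
      apply LinearMap.ext
      rintro ⟨x, hx⟩
      apply Subtype.ext
      show (if q ∈ S ∧ q ∈ comp S (eQ.symm j) then (1:k) else 0) *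
           ((if q ∈ comp S (eQ.symm j) ∧ q ∈ S then (1:k) else 0) * x) = x
      by_cases hqc : q ∈ comp S (eQ.symm j)
      · simp [hqc, comp_subset hqc]
      · simp only [if_neg hqc] at hx
        have hx0 : x = 0 := (Submodule.mem_bot k).mp hx
        simp [hx0]
    · rw [dif_neg hjj]
      apply NatTrans.ext
      funext q
      apply ModuleCat.hom_ext
      apply LinearMap.ext
      rintro ⟨x, hx⟩
      apply Subtype.ext
      show (if q ∈ S ∧ q ∈ comp S (eQ.symm j') then (1:k) else 0) *
           ((if q ∈ comp S (eQ.symm j) ∧ q ∈ S then (1:k) else 0) * x) = 0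
      by_cases hj : q ∈ comp S (eQ.symm j)
      · have hj' : q ∉ comp S (eQ.symm j') := fun h =>
          hjj (eQ.symm.injective (comp_eq_of_mem hj h))
        simp [hj']
      · simp only [if_neg hj] at hx
        have hx0 : x = 0 := (Submodule.mem_bot k).mp hx
        simp [hx0]
  have hmono : Mono (biproduct.lift π) := by
    have happ : ∀ q : P, Mono ((biproduct.lift π).app q) := by
      intro q
      rw [ModuleCat.mono_iff_injective]
      intro a b hab
      by_cases hq : q ∈ S
      · set c0 := Quotient.mk (zigSetoid S) ⟨q, hq⟩ with hc0
        set j0 := eQ c0 with hj0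
        have hqc : q ∈ comp S (eQ.symm j0) := ⟨hq, (eQ.symm_apply_apply c0).symm⟩
        have keyval : ∀ z : ↑((intervalModule k S hS).obj q),
            (π j0).app q z = (biproduct.π J j0).app q ((biproduct.lift π).app q z) := by
          intro z
          have h3 := congrArg (fun (τ : intervalModule k S hS ⟶ J j0) => τ.app q z)
            (biproduct.lift_π π j0)
          exact h3.symm
        have h4 : (π j0).app q a = (π j0).app q b := by
          rw [keyval, keyval, hab]
        have h5 : (if q ∈ S ∧ q ∈ comp S (eQ.symm j0) then (1:k) else 0) * a.1
            = (if q ∈ S ∧ q ∈ comp S (eQ.symm j0) then (1:k) else 0) * b.1 :=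
          congrArg Subtype.val h4
        rw [if_pos ⟨hq, hqc⟩, one_mul, one_mul] at h5
        exact Subtype.ext h5
      · exact Subtype.ext (by rw [val_eq_zero hq a, val_eq_zero hq b])
    exact NatTrans.mono_of_mono_app _
  refine ⟨biproduct.lift π, biproduct.desc ι, ?_, hinvhom⟩
  rw [← cancel_mono (biproduct.lift π), Category.assoc, hinvhom, Category.comp_id,
    Category.id_comp]

lemma ici_interval (p : P) : IsIntervalSet (Set.Ici p) := by
  refine ⟨⟨p, le_rfl⟩, fun x y z hx hy hxz hzy => le_trans hx hxz, ?_⟩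
  intro a b
  have h1 : ZigzagConnIn (Set.Ici p) a ⟨p, le_rfl⟩ :=
    Relation.ReflTransGen.single (Or.inr a.2)
  exact h1.tail (Or.inl b.2)

open Classical in
/-- The morphism from the interval module on `Set.Ici p` to `M` determined by `v ∈ M p`. -/
noncomputable def upHom (M : P ⥤ ModuleCat.{0} k) (p : P) (v : ↑(M.obj p)) :
    intervalModule k (Set.Ici p) (ici_interval p).2.1 ⟶ M where
  app q := ModuleCat.ofHom
    { toFun := fun x => if h : p ≤ q then (x : k) • (M.map (homOfLE h)) v else 0
      map_add' := fun x y => by by_cases h : p ≤ q <;> simp [h, add_smul]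
      map_smul' := fun c x => by by_cases h : p ≤ q <;> simp [h, mul_smul] }
  naturality {q r} g := by
    apply ModuleCat.hom_ext
    apply LinearMap.ext
    rintro ⟨x, hx⟩
    by_cases hq : p ≤ q
    · have hr : p ≤ r := hq.trans (leOfHom g)
      show (if h : p ≤ r then
            ((if q ∈ Set.Ici p ∧ r ∈ Set.Ici p then (1:k) else 0) * x) • M.map (homOfLE h) v
          else 0)
        = M.map g (if h : p ≤ q then x • M.map (homOfLE h) v else 0)
      rw [dif_pos hr, dif_pos hq, if_pos ⟨hq, hr⟩, one_mul, map_smul]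
      have he : homOfLE hr = homOfLE hq ≫ g := Subsingleton.elim _ _
      rw [he, M.map_comp]
      rfl
    · have hx0 : x = 0 := by
        simp only [if_neg (fun h : q ∈ Set.Ici p => hq h)] at hx
        exact (Submodule.mem_bot k).mp hx
      subst hx0
      show (if h : p ≤ r then
            ((if q ∈ Set.Ici p ∧ r ∈ Set.Ici p then (1:k) else 0) * 0) • M.map (homOfLE h) v
          else 0)
        = M.map g (if h : p ≤ q then (0:k) • M.map (homOfLE h) v else 0)
      rw [dif_neg hq]
      by_cases hr : p ≤ r
      · rw [dif_pos hr, mul_zero, zero_smul, map_zero]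
      · rw [dif_neg hr, map_zero]

def vl {A : Set P} {q : P} (x : ↥(if q ∈ A then (⊤ : Submodule k k) else ⊥)) : k := x.1

lemma app_eq_zero_of_not_injective {S : Set P} {hS : IsConvex S}
    {M : P ⥤ ModuleCat.{0} k} (φ : intervalModule k S hS ⟶ M) (p : P)
    (h : ¬ Function.Injective (φ.app p)) : ∀ x, φ.app p x = 0 := by
  obtain ⟨a, b, hab, hne⟩ := Function.not_injective_iff.mp h
  have hd : φ.app p (a - b) = 0 := by rw [map_sub, hab, sub_self]
  have hdv : vl (a - b) ≠ 0 := fun h0 => (sub_ne_zero.mpr hne) (eq_zero_of_val h0)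
  intro x
  have hxe : x = (vl x * (vl (a - b))⁻¹) • (a - b) := by
    apply Subtype.ext
    show vl x = (vl x * (vl (a - b))⁻¹) * vl (a - b)
    field_simp
  rw [hxe, map_smul, hd, smul_zero]

open Classical in
/-- The morphism induced on the interval module of a down-closed subset `S' ⊆ S`,
given that `φ` vanishes on `S \ S'`. -/
noncomputable def quotHom {S S' : Set P} (hS : IsConvex S) (hS' : IsConvex S')
    {M : P ⥤ ModuleCat.{0} k} (φ : intervalModule k S hS ⟶ M) (hsub : S' ⊆ S)
    (hvan : ∀ q, q ∈ S → q ∉ S' → ∀ y, φ.app q y = 0) :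
    intervalModule k S' hS' ⟶ M where
  app q := ModuleCat.ofHom (crossAux S' S q) ≫ φ.app q
  naturality {q r} g := by
    apply ModuleCat.hom_ext
    apply LinearMap.ext
    rintro ⟨x, hx⟩
    by_cases hq : q ∈ S'
    · have hqS : q ∈ S := hsub hq
      have hxqmem : x ∈ (if q ∈ S then (⊤ : Submodule k k) else ⊥) := by
        rw [if_pos hqS]; trivial
      have hnat := congrArg
        (fun (τ : (intervalModule k S hS).obj q ⟶ M.obj r) =>
          τ (⟨x, hxqmem⟩ : ↥(if q ∈ S then (⊤ : Submodule k k) else ⊥)))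
        (φ.naturality g)
      have hcq : crossAux (k := k) S' S q ⟨x, hx⟩
          = (⟨x, hxqmem⟩ : ↥(if q ∈ S then (⊤ : Submodule k k) else ⊥)) := by
        apply Subtype.ext
        show (if q ∈ S' ∧ q ∈ S then (1:k) else 0) * x = x
        rw [if_pos ⟨hq, hqS⟩, one_mul]
      show φ.app r (crossAux S' S r ((intervalModule k S' hS').map g ⟨x, hx⟩))
          = M.map g (φ.app q (crossAux S' S q ⟨x, hx⟩))
      rw [hcq]
      have hR : M.map g (φ.app q (⟨x, hxqmem⟩ : ↥(if q ∈ S then (⊤ : Submodule k k) else ⊥)))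
          = φ.app r ((intervalModule k S hS).map g
              (⟨x, hxqmem⟩ : ↥(if q ∈ S then (⊤ : Submodule k k) else ⊥))) := hnat.symm
      rw [hR]
      by_cases hr : r ∈ S'
      · congr 1
        apply Subtype.ext
        show (if r ∈ S' ∧ r ∈ S then (1:k) else 0) * ((if q ∈ S' ∧ r ∈ S' then (1:k) else 0) * x)
            = (if q ∈ S ∧ r ∈ S then (1:k) else 0) * x
        simp [hr, hsub hr, hq, hqS]
      · by_cases hrS : r ∈ S
        · exact (hvan r hrS hr _).trans (hvan r hrS hr _).symm
        · have hL0 : crossAux (k := k) S' S r ((intervalModule k S' hS').map g ⟨x, hx⟩) = 0 := by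
            apply eq_zero_of_val
            show (if r ∈ S' ∧ r ∈ S then (1:k) else 0) *
                ((if q ∈ S' ∧ r ∈ S' then (1:k) else 0) * x) = 0
            rw [if_neg (fun hc : r ∈ S' ∧ r ∈ S => hr hc.1), zero_mul]
          have hR0 : (intervalModule k S hS).map g
              (⟨x, hxqmem⟩ : ↥(if q ∈ S then (⊤ : Submodule k k) else ⊥)) = 0 := by
            apply eq_zero_of_val
            show (if q ∈ S ∧ r ∈ S then (1:k) else 0) * x = 0
            rw [if_neg (fun hc : q ∈ S ∧ r ∈ S => hrS hc.2), zero_mul]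
          rw [hL0, hR0]
          exact rfl
    · have hx0 : x = 0 := by
        simp only [if_neg hq] at hx
        exact (Submodule.mem_bot k).mp hx
      subst hx0
      have h00 : (⟨(0:k), hx⟩ : ↥(if q ∈ S' then (⊤ : Submodule k k) else ⊥)) = 0 :=
        eq_zero_of_val rfl
      show (ModuleCat.ofHom (crossAux S' S r) ≫ φ.app r)
            ((intervalModule k S' hS').map g ⟨(0:k), hx⟩)
          = M.map g ((ModuleCat.ofHom (crossAux S' S q) ≫ φ.app q) ⟨(0:k), hx⟩)
      rw [h00]
      simp only [map_zero]
      exact (congrArg (ModuleCat.ofHom (crossAux S' S r) ≫ φ.app r).hom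
        ((intervalModule k S' hS').map g).hom.map_zero).trans
        (ModuleCat.ofHom (crossAux S' S r) ≫ φ.app r).hom.map_zero

lemma quotHom_fac {S S' : Set P} (hS : IsConvex S) (hS' : IsConvex S')
    {M : P ⥤ ModuleCat.{0} k} (φ : intervalModule k S hS ⟶ M) (hsub : S' ⊆ S)
    (hvan : ∀ q, q ∈ S → q ∉ S' → ∀ y, φ.app q y = 0)
    (hc : ∀ ⦃q r : P⦄, q ≤ r → q ∈ S → r ∈ S' → (r ∈ S ↔ q ∈ S')) :
    crossHom S S' hS hS' hc ≫ quotHom hS hS' φ hsub hvan = φ := by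
  apply NatTrans.ext
  funext q
  apply ModuleCat.hom_ext
  apply LinearMap.ext
  rintro ⟨x, hx⟩
  show φ.app q (crossAux S' S q (crossAux S S' q ⟨x, hx⟩)) = φ.app q ⟨x, hx⟩
  by_cases hq : q ∈ S'
  · congr 1
    apply Subtype.ext
    show (if q ∈ S' ∧ q ∈ S then (1:k) else 0) * ((if q ∈ S ∧ q ∈ S' then (1:k) else 0) * x) = x
    simp [hq, hsub hq]
  · by_cases hqS : q ∈ S
    · exact (hvan q hqS hq _).trans (hvan q hqS hq _).symm
    · have hx0 : x = 0 := by
        simp only [if_neg hqS] at hx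
        exact (Submodule.mem_bot k).mp hx
      subst hx0
      have h00 : (⟨(0:k), hx⟩ : ↥(if q ∈ S then (⊤ : Submodule k k) else ⊥)) = 0 :=
        eq_zero_of_val rfl
      rw [h00]
      simp only [map_zero]

lemma crossHom_app_zero {A B : Set P} (hA : IsConvex A) (hB : IsConvex B)
    (hc : ∀ ⦃q r : P⦄, q ≤ r → q ∈ A → r ∈ B → (r ∈ A ↔ q ∈ B))
    {q : P} (hq : ¬(q ∈ A ∧ q ∈ B)) (x : ↑((intervalModule k A hA).obj q)) :
    (crossHom A B hA hB hc).app q x = 0 := by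
  apply eq_zero_of_val
  obtain ⟨xv, hx⟩ := x
  show (if q ∈ A ∧ q ∈ B then (1:k) else 0) * xv = 0
  rw [if_neg hq, zero_mul]

end ICov





end ICovAux

/-- Properties of interval covers: surjectivity, summand-injectivity,
equality of supports, and each summand is (isomorphic to) an interval submodule of `M`. -/
theorem intervalCover_summand_injective
    (k : Type) [Field k] (P : Type) [PartialOrder P] [Finite P]
    (M X : P ⥤ ModuleCat.{0} k) (hM : PointwiseFinite k M)
    (f : X ⟶ M) (hf : IsIntervalCover k f)
    (m : ℕ) (Xs : Fin m → (P ⥤ ModuleCat.{0} k))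
    (hXs : ∀ i, IsIntervalModule k (Xs i)) (e : X ≅ ⨁ Xs) :
    (∀ p : P, Function.Surjective (f.app p)) ∧
    (∀ (i : Fin m) (p : P), Function.Injective ((biproduct.ι Xs i ≫ e.inv ≫ f).app p)) ∧
    moduleSupport k X = moduleSupport k M ∧
    (∀ i : Fin m, ∃ (N : P ⥤ ModuleCat.{0} k) (ιN : N ⟶ M),
      IsIntervalModule k N ∧ Mono ιN ∧ Nonempty (Xs i ≅ N)) := by
  classical
  -- pointwise sum decomposition in the biproduct
  have hsum_pt : ∀ (p : P) (x : ↑((⨁ Xs).obj p)),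
      x = ∑ j : Fin m, (biproduct.π Xs j ≫ biproduct.ι Xs j).app p x := by
    intro p x
    have h2 := congrArg (fun (τ : (⨁ Xs) ⟶ (⨁ Xs)) => τ.app p x) (biproduct.total (f := Xs))
    simp only at h2
    rw [NatTrans.app_sum] at h2
    change (∑ i, (biproduct.π Xs i ≫ biproduct.ι Xs i).app p).hom x = (NatTrans.app (𝟙 (⨁ Xs) : (⨁ Xs) ⟶ (⨁ Xs)) p).hom x at h2
    rw [ModuleCat.hom_sum, LinearMap.sum_apply] at h2
    exact h2.symm
  have he_retr : ∀ (p : P) (x : ↑(X.obj p)), e.inv.app p (e.hom.app p x) = x := by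
    intro p x
    have h2 := congrArg (fun (τ : X ⟶ X) => τ.app p x) e.hom_inv_id
    exact h2
  -- Part 1: surjectivity
  have surj : ∀ p : P, Function.Surjective (f.app p) := by
    intro p y
    obtain ⟨h, hh⟩ := hf.1.2 (ICov.upHom M p y)
      (ICov.decomposable_of_intervalModule ⟨Set.Ici p, ICov.ici_interval p, ⟨Iso.refl _⟩⟩)
    refine ⟨h.app p (ICov.oneEl (Set.mem_Ici.mpr (le_refl p))), ?_⟩
    have h1 : f.app p (h.app p (ICov.oneEl (Set.mem_Ici.mpr (le_refl p))))
        = (h ≫ f).app p (ICov.oneEl (Set.mem_Ici.mpr (le_refl p))) := rfl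
    rw [h1, hh]
    show (if hle : p ≤ p then
        ((ICov.oneEl (Set.mem_Ici.mpr (le_refl p)) :
          ↥(if p ∈ Set.Ici p then (⊤ : Submodule k k) else ⊥)) : k) • M.map (homOfLE hle) y
      else 0) = y
    rw [dif_pos (le_refl p), ICov.oneEl_val, one_smul]
    have h2 : homOfLE (le_refl p) = 𝟙 p := Subsingleton.elim _ _
    rw [h2, M.map_id]
    rfl
  -- Part 2: summandwise injectivity
  have inj : ∀ (i : Fin m) (p : P),
      Function.Injective ((biproduct.ι Xs i ≫ e.inv ≫ f).app p) := by
    intro i p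
    by_contra hni
    obtain ⟨S, hSint, ⟨u⟩⟩ := hXs i
    set hconv := hSint.2.1 with hconvdef
    set φ : intervalModule k S hconv ⟶ M := u.inv ≫ biproduct.ι Xs i ≫ e.inv ≫ f with hφdef
    have hretr : ∀ x : ↑((Xs i).obj p), u.inv.app p (u.hom.app p x) = x := by
      intro x
      have h2 := congrArg (fun (τ : Xs i ⟶ Xs i) => τ.app p x) u.hom_inv_id
      exact h2
    have hsec : ∀ y : ↑((intervalModule k S hconv).obj p),
        u.hom.app p (u.inv.app p y) = y := by
      intro y
      have h2 := congrArg
        (fun (τ : intervalModule k S hconv ⟶ intervalModule k S hconv) => τ.app p y)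
        u.inv_hom_id
      exact h2
    -- φ vanishes at p
    have hφnot : ¬ Function.Injective (φ.app p) := by
      intro hinj
      apply hni
      intro a b hab
      have h1 : φ.app p (u.hom.app p a) = φ.app p (u.hom.app p b) := by
        show (biproduct.ι Xs i ≫ e.inv ≫ f).app p (u.inv.app p (u.hom.app p a))
          = (biproduct.ι Xs i ≫ e.inv ≫ f).app p (u.inv.app p (u.hom.app p b))
        rw [hretr, hretr]
        exact hab
      have h2 := hinj h1
      calc a = u.inv.app p (u.hom.app p a) := (hretr a).symm
        _ = u.inv.app p (u.hom.app p b) := by rw [h2]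
        _ = b := hretr b
    have hφ0 : ∀ x, φ.app p x = 0 := ICov.app_eq_zero_of_not_injective φ p hφnot
    -- p ∈ S
    have hp : p ∈ S := by
      by_contra hpS
      apply hni
      intro a b hab
      have hss : ∀ z w : ↑((intervalModule k S hconv).obj p), z = w := by
        intro z w
        exact Subtype.ext (by rw [ICov.val_eq_zero hpS z, ICov.val_eq_zero hpS w])
      calc a = u.inv.app p (u.hom.app p a) := (hretr a).symm
        _ = u.inv.app p (u.hom.app p b) := by rw [hss (u.hom.app p a) (u.hom.app p b)]
        _ = b := hretr b
    -- the support of φ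
    set S' : Set P := {q | q ∈ S ∧ ¬ ∀ y, φ.app q y = 0} with hS'def
    have hsub : S' ⊆ S := fun q hq => hq.1
    have hup : ∀ ⦃q r : P⦄, q ≤ r → q ∈ S → r ∈ S →
        (∀ y, φ.app q y = 0) → ∀ y, φ.app r y = 0 := by
      intro q r hqr hq hr h0 y
      obtain ⟨yv, hy⟩ := y
      have hxmem : yv ∈ (if q ∈ S then (⊤ : Submodule k k) else ⊥) := by
        rw [if_pos hq]; trivial
      have hnat := congrArg
        (fun (τ : (intervalModule k S hconv).obj q ⟶ M.obj r) =>
          τ (⟨yv, hxmem⟩ : ↥(if q ∈ S then (⊤ : Submodule k k) else ⊥)))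
        (φ.naturality (homOfLE hqr))
      have hL : φ.app r ((intervalModule k S hconv).map (homOfLE hqr)
          (⟨yv, hxmem⟩ : ↥(if q ∈ S then (⊤ : Submodule k k) else ⊥))) = φ.app r ⟨yv, hy⟩ := by
        congr 1
        apply Subtype.ext
        show (if q ∈ S ∧ r ∈ S then (1:k) else 0) * yv = yv
        rw [if_pos ⟨hq, hr⟩, one_mul]
      have hR : M.map (homOfLE hqr) (φ.app q
          (⟨yv, hxmem⟩ : ↥(if q ∈ S then (⊤ : Submodule k k) else ⊥))) = 0 := by
        exact (congrArg (M.map (homOfLE hqr)).hom (h0 _)).trans (M.map (homOfLE hqr)).hom.map_zero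
      have h3 : φ.app r ⟨yv, hy⟩ = 0 := by
        rw [← hL]
        exact hnat.trans hR
      exact h3
    have hvan : ∀ q, q ∈ S → q ∉ S' → ∀ y, φ.app q y = 0 := by
      intro q hq hq'
      by_contra hno
      exact hq' ⟨hq, hno⟩
    have hS'conv : IsConvex S' := by
      intro x y z hx hy hxz hzy
      have hzS : z ∈ S := hconv hx.1 hy.1 hxz hzy
      refine ⟨hzS, ?_⟩
      intro h0
      exact hy.2 (hup hzy hzS hy.1 h0)
    have hpS' : p ∉ S' := fun hc => hc.2 (by intro y; exact hφ0 y)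
    have hcρ : ∀ ⦃q r : P⦄, q ≤ r → q ∈ S → r ∈ S' → (r ∈ S ↔ q ∈ S') := by
      intro q r hqr hq hr
      refine iff_of_true hr.1 ⟨hq, ?_⟩
      intro h0
      exact hr.2 (hup hqr hq hr.1 h0)
    set ρ : intervalModule k S hconv ⟶ intervalModule k S' hS'conv :=
      ICov.crossHom S S' hconv hS'conv hcρ with hρdef
    set ψ : intervalModule k S' hS'conv ⟶ M :=
      ICov.quotHom hconv hS'conv φ hsub hvan with hψdef
    have hfac : ρ ≫ ψ = φ := ICov.quotHom_fac hconv hS'conv φ hsub hvan hcρ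
    obtain ⟨h, hh⟩ := hf.1.2 ψ (ICov.intervalModule_decomposable S' hS'conv)
    -- the endomorphism g
    set comps : ∀ j : Fin m, Xs j ⟶ X :=
      Function.update (fun j => biproduct.ι Xs j ≫ e.inv) i (u.hom ≫ ρ ≫ h) with hcomps
    set g : X ⟶ X := e.hom ≫ biproduct.desc comps with hg
    have hgf : g ≫ f = f := by
      have hd : biproduct.desc comps ≫ f = e.inv ≫ f := by
        apply biproduct.hom_ext'
        intro j
        rw [biproduct.ι_desc_assoc]
        by_cases hj : j = i
        · subst hj
          rw [hcomps, Function.update_self]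
          have h1 : (u.hom ≫ ρ ≫ h) ≫ f = u.hom ≫ (ρ ≫ ψ) := by
            rw [Category.assoc, Category.assoc, hh]
          rw [h1, hfac, hφdef, Iso.hom_inv_id_assoc]
        · rw [hcomps, Function.update_of_ne hj, Category.assoc]
      rw [hg, Category.assoc, hd, Iso.hom_inv_id_assoc]
    have hgiso : IsIso g := hf.2 g hgf
    -- the contradiction
    set D : (⨁ Xs) ⟶ Xs i := biproduct.desc comps ≫ e.hom ≫ biproduct.π Xs i with hD
    have hDj : ∀ j : Fin m, j ≠ i → biproduct.ι Xs j ≫ D = 0 := by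
      intro j hj
      rw [hD, biproduct.ι_desc_assoc, hcomps, Function.update_of_ne hj, Category.assoc,
        Iso.inv_hom_id_assoc]
      exact biproduct.ι_π_ne _ hj
    have hDi : ∀ x, (biproduct.ι Xs i ≫ D).app p x = 0 := by
      intro x
      have h1 : biproduct.ι Xs i ≫ D = u.hom ≫ ρ ≫ h ≫ e.hom ≫ biproduct.π Xs i := by
        rw [hD, biproduct.ι_desc_assoc, hcomps, Function.update_self]
        simp only [Category.assoc]
      rw [h1]
      show (h ≫ e.hom ≫ biproduct.π Xs i).app p (ρ.app p (u.hom.app p x)) = 0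
      generalize u.hom.app p x = y
      have hρ0 : ρ.app p y = 0 := by
        rw [hρdef]
        exact ICov.crossHom_app_zero hconv hS'conv hcρ
          (fun hc : p ∈ S ∧ p ∈ S' => hpS' hc.2) y
      rw [hρ0, map_zero]
    have hD0 : ∀ x, D.app p x = 0 := by
      intro x
      calc D.app p x
          = D.app p (∑ j : Fin m, (biproduct.π Xs j ≫ biproduct.ι Xs j).app p x) := by
            rw [← hsum_pt p x]
        _ = ∑ j : Fin m, D.app p ((biproduct.π Xs j ≫ biproduct.ι Xs j).app p x) :=
            map_sum _ _ _
        _ = 0 := by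
            apply Finset.sum_eq_zero
            intro j _
            by_cases hj : j = i
            · subst hj
              exact hDi ((biproduct.π Xs j).app p x)
            · have h4 : D.app p ((biproduct.π Xs j ≫ biproduct.ι Xs j).app p x)
                  = (biproduct.ι Xs j ≫ D).app p ((biproduct.π Xs j).app p x) := rfl
              rw [h4, hDj j hj]
              rfl
    have hy0 : ∀ y : ↑((Xs i).obj p), y = 0 := by
      intro y
      have hy1 : (e.hom ≫ biproduct.π Xs i).app p ((biproduct.ι Xs i ≫ e.inv).app p y) = y := by
        have h5 := congrArg (fun (τ : Xs i ⟶ Xs i) => τ.app p y)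
          (show (biproduct.ι Xs i ≫ e.inv) ≫ e.hom ≫ biproduct.π Xs i = 𝟙 (Xs i) by
            rw [Category.assoc, Iso.inv_hom_id_assoc, biproduct.ι_π_self])
        exact h5
      obtain ⟨w, hw⟩ : ∃ w, g.app p w = (biproduct.ι Xs i ≫ e.inv).app p y := by
        refine ⟨(inv g).app p ((biproduct.ι Xs i ≫ e.inv).app p y), ?_⟩
        have h6 := congrArg
          (fun (τ : X ⟶ X) => τ.app p ((biproduct.ι Xs i ≫ e.inv).app p y))
          (IsIso.inv_hom_id g)
        exact h6
      have h7 : (e.hom ≫ biproduct.π Xs i).app p (g.app p w) = 0 := by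
        show D.app p (e.hom.app p w) = 0
        exact hD0 _
      rw [hw, hy1] at h7
      exact h7
    have hone := ICov.oneEl_ne_zero (k := k) hp
    apply hone
    have h8 : u.inv.app p (ICov.oneEl hp) = 0 := hy0 _
    have h9 := congrArg (u.hom.app p) h8
    rw [map_zero] at h9
    exact (hsec _).symm.trans h9
  -- Part 3: supports agree
  have hzero_iff : ∀ (A : ModuleCat.{0} k), IsZero A ↔ Subsingleton A := by
    intro A
    constructor
    · intro hA
      refine ⟨fun a b => ?_⟩
      have h1 : (𝟙 A : A ⟶ A) = 0 := hA.eq_of_src _ _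
      have h2 := congrArg (fun (τ : A ⟶ A) => τ a) h1
      have h3 := congrArg (fun (τ : A ⟶ A) => τ b) h1
      calc a = (0 : A ⟶ A) a := h2
        _ = (0 : A ⟶ A) b := rfl
        _ = b := h3.symm
    · intro hA
      exact ModuleCat.isZero_of_subsingleton A
  have hMX : ∀ p : P, Subsingleton ↑(M.obj p) → Subsingleton ↑(X.obj p) := by
    intro p hM
    have hXs_sub : ∀ j : Fin m, Subsingleton ↑((Xs j).obj p) := by
      intro j
      refine ⟨fun a b => ?_⟩
      apply inj j p
      exact Subsingleton.elim _ _
    have hz : ∀ x : ↑(X.obj p), e.hom.app p x = 0 := by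
      intro x
      rw [hsum_pt p (e.hom.app p x)]
      apply Finset.sum_eq_zero
      intro j _
      have h4 : (biproduct.π Xs j ≫ biproduct.ι Xs j).app p (e.hom.app p x)
          = (biproduct.ι Xs j).app p ((biproduct.π Xs j).app p (e.hom.app p x)) := rfl
      rw [h4, Subsingleton.elim ((biproduct.π Xs j).app p (e.hom.app p x)) 0, map_zero]
    refine ⟨fun a b => ?_⟩
    calc a = e.inv.app p (e.hom.app p a) := (he_retr p a).symm
      _ = e.inv.app p (e.hom.app p b) := by rw [hz a, hz b]
      _ = b := he_retr p b
  have hXM : ∀ p : P, Subsingleton ↑(X.obj p) → Subsingleton ↑(M.obj p) := by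
    intro p hX
    refine ⟨fun a b => ?_⟩
    obtain ⟨xa, hxa⟩ := surj p a
    obtain ⟨xb, hxb⟩ := surj p b
    rw [← hxa, ← hxb, Subsingleton.elim xa xb]
  have hsupp : moduleSupport k X = moduleSupport k M := by
    ext p
    simp only [moduleSupport, Set.mem_setOf_eq]
    constructor
    · intro hX hMz
      exact hX ((hzero_iff _).mpr (hMX p ((hzero_iff _).mp hMz)))
    · intro hM hXz
      exact hM ((hzero_iff _).mpr (hXM p ((hzero_iff _).mp hXz)))
  refine ⟨surj, inj, hsupp, ?_⟩
  intro i
  refine ⟨Xs i, biproduct.ι Xs i ≫ e.inv ≫ f, hXs i, ?_, ⟨Iso.refl _⟩⟩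
  have hmono : ∀ p : P, Mono ((biproduct.ι Xs i ≫ e.inv ≫ f).app p) := fun p =>
    (ModuleCat.mono_iff_injective _).mpr (inj i p)
  exact NatTrans.mono_of_mono_app _
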